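/- Let m ≥ 1 and let x : Fin m → ℝ be nonconstant (there exist i, j with x_i ≠ x_j). Then for every τ > 0 there exists ω > 0 such that the mellowmax value equals the softmax-weighted value: log( (1/m)·∑_i exp(ω·x_i) ) / ω = g_x(τ). -/

import Mathlib

/-- The softmax-weighted value `g_x(τ) = (∑ i, exp(τ·x_i)·x_i) / (∑ i, exp(τ·x_i))`. -/
noncomputable def gval {m : ℕ} (x : Fin m → ℝ) (τ : ℝ) : ℝ :=
  (∑ i, Real.exp (τ * x i) * x i) / (∑ i, Real.exp (τ * x i))

/-- The mellowmax value `mm_ω(x) = log((1/m)·∑ i, exp(ω·x_i)) / ω`. -/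
noncomputable def mellowmax {m : ℕ} (x : Fin m → ℝ) (ω : ℝ) : ℝ :=
  Real.log ((1 / (m : ℝ)) * ∑ i, Real.exp (ω * x i)) / ω

open Finset Real Filter

-- strict Chebyshev for exp weights
lemma cheb {m : ℕ} (x : Fin m → ℝ) (τ : ℝ) (hτ : 0 < τ)
    (hnc : ∃ i j, x i ≠ x j) :
    (∑ i, Real.exp (τ * x i)) * (∑ i, x i) < (m:ℝ) * ∑ i, Real.exp (τ * x i) * x i := by
  set e : Fin m → ℝ := fun i => Real.exp (τ * x i) with he
  have key : ∑ i, ∑ j, (e i - e j) * (x i - x j)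
      = 2*((m:ℝ) * ∑ i, e i * x i - (∑ i, e i) * (∑ i, x i)) := by
    simp only [sub_mul, mul_sub, Finset.sum_sub_distrib, Finset.sum_const,
      Finset.card_univ, Fintype.card_fin, nsmul_eq_mul, ← Finset.sum_mul, ← Finset.mul_sum]
    ring
  have hterm : ∀ i j, 0 ≤ (e i - e j) * (x i - x j) := by
    intro i j
    rcases le_total (x i) (x j) with h | h
    · have : e i ≤ e j := Real.exp_le_exp.2 (by nlinarith)
      nlinarith
    · have : e j ≤ e i := Real.exp_le_exp.2 (by nlinarith)
      nlinarith
  obtain ⟨i₀, j₀, hij⟩ := hnc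
  have hpos : 0 < (e i₀ - e j₀) * (x i₀ - x j₀) := by
    rcases lt_or_gt_of_ne hij with h | h
    · have : e i₀ < e j₀ := Real.exp_lt_exp.2 (by nlinarith)
      nlinarith
    · have : e j₀ < e i₀ := Real.exp_lt_exp.2 (by nlinarith)
      nlinarith
  have hT : 0 < ∑ i, ∑ j, (e i - e j) * (x i - x j) := by
    apply Finset.sum_pos' (fun i _ => Finset.sum_nonneg fun j _ => hterm i j)
    exact ⟨i₀, Finset.mem_univ _,
      Finset.sum_pos' (fun j _ => hterm i₀ j) ⟨j₀, Finset.mem_univ _, hpos⟩⟩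
  rw [key] at hT
  linarith

theorem mellowmax_aux
    {m : ℕ} (hm : 1 ≤ m) (x : Fin m → ℝ)
    (hnc : ∃ i j, x i ≠ x j) (τ : ℝ) (hτ : 0 < τ) :
    ∃ ω > (0 : ℝ), (fun ω => Real.log ((1 / (m : ℝ)) * ∑ i, Real.exp (ω * x i)) / ω) ω
      = (∑ i, Real.exp (τ * x i) * x i) / (∑ i, Real.exp (τ * x i)) := by
  have hm0 : (0:ℝ) < m := by exact_mod_cast hm
  haveI : Nonempty (Fin m) := ⟨⟨0, hm⟩⟩
  set mm : ℝ → ℝ := fun ω => Real.log ((1 / (m : ℝ)) * ∑ i, Real.exp (ω * x i)) / ω with hmm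
  set A : ℝ := (∑ i, Real.exp (τ * x i) * x i) / (∑ i, Real.exp (τ * x i)) with hA
  have hSpos : ∀ t : ℝ, 0 < ∑ i, Real.exp (t * x i) :=
    fun t => Finset.sum_pos (fun i _ => Real.exp_pos _) Finset.univ_nonempty
  -- max
  obtain ⟨k, hk⟩ := Finite.exists_max x
  set M : ℝ := x k with hM
  -- A < M
  have hAM : A < M := by
    have hlt : ∑ i, Real.exp (τ * x i) * x i < ∑ i, Real.exp (τ * x i) * M := by
      obtain ⟨i₀, j₀, hij⟩ := hnc
      have : ∃ j, x j < M := by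
        rcases lt_or_gt_of_ne hij with h | h
        · exact ⟨i₀, lt_of_lt_of_le h (hk j₀)⟩
        · exact ⟨j₀, lt_of_lt_of_le h (hk i₀)⟩
      obtain ⟨j, hj⟩ := this
      exact Finset.sum_lt_sum
        (fun i _ => mul_le_mul_of_nonneg_left (hk i) (Real.exp_pos _).le)
        ⟨j, Finset.mem_univ _, mul_lt_mul_of_pos_left hj (Real.exp_pos _)⟩
    rw [hA, div_lt_iff₀ (hSpos τ)]
    calc ∑ i, Real.exp (τ * x i) * x i < ∑ i, Real.exp (τ * x i) * M := hlt
      _ = M * ∑ i, Real.exp (τ * x i) := by rw [Finset.mul_sum]; exact Finset.sum_congr rfl fun i _ => mul_comm _ _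
  -- mean < A
  have hmeanA : (∑ i, x i) / m < A := by
    rw [hA, div_lt_div_iff₀ hm0 (hSpos τ)]
    have := cheb x τ hτ hnc
    nlinarith [hSpos τ]
  -- lower bound for mm at large ω
  have hlb : ∀ ω : ℝ, 0 < ω → M - Real.log m / ω ≤ mm ω := by
    intro ω hω
    have h1 : Real.exp (ω * M) ≤ ∑ i, Real.exp (ω * x i) :=
      Finset.single_le_sum (f := fun i => Real.exp (ω * x i))
        (fun i _ => (Real.exp_pos _).le) (Finset.mem_univ k)
    have h2 : Real.exp (ω * M) / m ≤ (1 / (m:ℝ)) * ∑ i, Real.exp (ω * x i) := by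
      rw [div_eq_mul_inv, mul_comm, ← one_div]
      exact mul_le_mul_of_nonneg_left h1 (by positivity)
    have h3 : ω * M - Real.log m ≤ Real.log ((1 / (m:ℝ)) * ∑ i, Real.exp (ω * x i)) := by
      have := Real.log_le_log (by positivity) h2
      rwa [Real.log_div (Real.exp_ne_zero _) (ne_of_gt hm0), Real.log_exp] at this
    show M - Real.log m / ω ≤ Real.log ((1 / (m:ℝ)) * ∑ i, Real.exp (ω * x i)) / ω
    rw [sub_le_iff_le_add, ← add_div, le_div_iff₀ hω]
    linarith
  -- tendsto mean at 0+
  have htend : Tendsto mm (nhdsWithin 0 (Set.Ioi 0)) (nhds ((∑ i, x i) / m)) := by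
    have hf : HasDerivAt (fun ω : ℝ => Real.log ((1 / (m : ℝ)) * ∑ i, Real.exp (ω * x i)))
        ((∑ i, x i) / m) 0 := by
      have hsum : HasDerivAt (fun ω : ℝ => ∑ i, Real.exp (ω * x i)) (∑ i, x i) 0 := by
        have : HasDerivAt (fun ω : ℝ => ∑ i, Real.exp (ω * x i))
            (∑ i, Real.exp (0 * x i) * x i) 0 :=
          HasDerivAt.fun_sum fun i _ => ((hasDerivAt_mul_const (x i)).exp)
        simpa using this
      have hc : HasDerivAt (fun ω : ℝ => (1 / (m : ℝ)) * ∑ i, Real.exp (ω * x i))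
          ((1 / (m:ℝ)) * ∑ i, x i) 0 := hsum.const_mul _
      have harg : (1 / (m:ℝ)) * ∑ i, Real.exp ((0:ℝ) * x i) ≠ 0 := by
        have := hSpos 0
        positivity
      have hm' : (m:ℝ) ≠ 0 := ne_of_gt hm0
      have := hc.log harg
      convert this using 1
      simp only [zero_mul, Real.exp_zero, Finset.sum_const, Finset.card_univ,
        Fintype.card_fin, nsmul_eq_mul, mul_one]
      field_simp
    have h0 : Real.log ((1 / (m : ℝ)) * ∑ i, Real.exp ((0:ℝ) * x i)) = 0 := by
      have hm' : (m:ℝ) ≠ 0 := ne_of_gt hm0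
      simp only [zero_mul, Real.exp_zero, Finset.sum_const, Finset.card_univ,
        Fintype.card_fin, nsmul_eq_mul, mul_one]
      rw [one_div, inv_mul_cancel₀ hm', Real.log_one]
    have := (hasDerivAt_iff_tendsto_slope.1 hf).mono_left
      (nhdsWithin_mono _ (by intro t ht; exact ne_of_gt ht))
    refine this.congr' ?_
    filter_upwards [self_mem_nhdsWithin] with t ht
    show slope (fun ω : ℝ => Real.log ((1 / (m : ℝ)) * ∑ i, Real.exp (ω * x i))) 0 t = mm t
    rw [slope_def_field, hmm]
    simp only [h0, sub_zero]
  -- find ω₁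
  have hev : ∀ᶠ ω in nhdsWithin 0 (Set.Ioi 0), mm ω < A ∧ 0 < ω := by
    filter_upwards [htend.eventually_lt_const hmeanA, self_mem_nhdsWithin] with t h1 h2
    exact ⟨h1, h2⟩
  obtain ⟨ω₁, hω₁A, hω₁⟩ := hev.exists
  -- choose ω₂
  set ω₂ : ℝ := max (ω₁ + 1) (Real.log m / (M - A) + 1) with hω₂def
  have h12 : ω₁ < ω₂ := lt_of_lt_of_le (by linarith) (le_max_left _ _)
  have hω₂pos : 0 < ω₂ := lt_trans hω₁ h12
  have hAω₂ : A < mm ω₂ := by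
    have hb := hlb ω₂ hω₂pos
    have hlogm : 0 ≤ Real.log m := Real.log_nonneg (by exact_mod_cast hm)
    have : Real.log m / (M - A) < ω₂ := lt_of_lt_of_le (by linarith) (le_max_right _ _)
    have : Real.log m / ω₂ < M - A := by
      rw [div_lt_iff₀ hω₂pos]
      rw [div_lt_iff₀ (by linarith : (0:ℝ) < M - A)] at this
      linarith [mul_comm (M - A) ω₂]
    linarith
  -- IVT
  have hcont : ContinuousOn mm (Set.Icc ω₁ ω₂) := by
    apply ContinuousOn.div
    · apply ContinuousOn.log
      · exact Continuous.continuousOn (continuous_const.mul (continuous_finset_sum _ fun i _ =>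
          Real.continuous_exp.comp ((continuous_id).mul continuous_const)))
      · intro t ht
        have := hSpos t
        positivity
    · exact continuousOn_id
    · intro t ht
      exact ne_of_gt (lt_of_lt_of_le hω₁ ht.1)
  have := intermediate_value_Ioo (le_of_lt h12) hcont
  have hmem : A ∈ Set.Ioo (mm ω₁) (mm ω₂) := ⟨hω₁A, hAω₂⟩
  obtain ⟨ω, hω, hωA⟩ := this hmem
  exact ⟨ω, lt_trans hω₁ hω.1, hωA⟩

/-- For a nonconstant value vector and any `τ > 0`, there is an `ω > 0` at which
the mellowmax value equals the softmax-weighted value. -/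
theorem exists_mellowmax_eq_gval
    {m : ℕ} (hm : 1 ≤ m) (x : Fin m → ℝ)
    (hnc : ∃ i j, x i ≠ x j) (τ : ℝ) (hτ : 0 < τ) :
    ∃ ω > (0 : ℝ), mellowmax x ω = gval x τ := by
  obtain ⟨ω, hω, h⟩ := mellowmax_aux hm x hnc τ hτ
  exact ⟨ω, hω, by simpa [mellowmax, gval] using h⟩
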